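/- For any finite sequence of real numbers a_1, ..., a_n, the maximum of Σ_i ε_i a_i over all sign vectors (ε_1,...,ε_n) ∈ {-1,+1}^n having an even number of -1's equals Σ_i |a_i| - 2·min_i |a_i| if a_1·a_2·...·a_n < 0, and equals Σ_i |a_i| otherwise. -/

import Mathlib

open Finset

/-- Number of minus signs in a sign vector (encoded as a Boolean vector,
`true` meaning the sign `-1`). -/
def negCount {ι : Type*} [Fintype ι] [DecidableEq ι] (ε : ι → Bool) : ℕ :=
  (Finset.univ.filter (fun i => ε i = true)).card

/-- The signed sum `Σ ε_i a_i` corresponding to a sign vector. -/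
def sgnSum {ι : Type*} [Fintype ι] (a : ι → ℝ) (ε : ι → Bool) : ℝ :=
  ∑ i, (if ε i then -(a i) else a i)

/-- Sign vectors with an even number of `-1`'s. -/
def evenSigns (ι : Type*) [Fintype ι] [DecidableEq ι] : Finset (ι → Bool) :=
  Finset.univ.filter (fun ε => Even (negCount ε))

/-- Sign vectors with an odd number of `-1`'s. -/
def oddSigns (ι : Type*) [Fintype ι] [DecidableEq ι] : Finset (ι → Bool) :=
  Finset.univ.filter (fun ε => Odd (negCount ε))

lemma evenSigns_nonempty (ι : Type*) [Fintype ι] [DecidableEq ι] :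
    (evenSigns ι).Nonempty :=
  ⟨fun _ => false, by
    refine Finset.mem_filter.mpr ⟨Finset.mem_univ _, ?_⟩
    simp [negCount]⟩

lemma oddSigns_nonempty (ι : Type*) [Fintype ι] [DecidableEq ι] [Nonempty ι] :
    (oddSigns ι).Nonempty := by
  refine ⟨fun i => decide (i = Classical.arbitrary ι), ?_⟩
  refine Finset.mem_filter.mpr ⟨Finset.mem_univ _, ?_⟩
  simp [negCount, Finset.filter_eq']

/-- `s_even`: maximum of signed sums over sign vectors with evenly many minuses. -/
noncomputable def sEven {ι : Type*} [Fintype ι] [DecidableEq ι] (a : ι → ℝ) : ℝ :=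
  (evenSigns ι).sup' (evenSigns_nonempty ι) (sgnSum a)

/-- `s_odd`: maximum of signed sums over sign vectors with oddly many minuses. -/
noncomputable def sOdd {ι : Type*} [Fintype ι] [DecidableEq ι] [Nonempty ι] (a : ι → ℝ) : ℝ :=
  (oddSigns ι).sup' (oddSigns_nonempty ι) (sgnSum a)

set_option linter.unusedSectionVars false
section Aux
variable {ι : Type*} [Fintype ι] [DecidableEq ι]

lemma ite_sgn_eq_abs (a : ι → ℝ) (i : ι) :
    (if decide (a i < 0) = true then -(a i) else a i) = |a i| := by
  by_cases h : a i < 0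
  · simp [h, abs_of_neg h]
  · simp [h, abs_of_nonneg (le_of_not_gt h)]

lemma sgnSum_le_sum_abs (a : ι → ℝ) (ε : ι → Bool) : sgnSum a ε ≤ ∑ i, |a i| := by
  unfold sgnSum
  exact Finset.sum_le_sum fun i _ => by split <;> [exact neg_le_abs _; exact le_abs_self _]

lemma sgnSum_canonical (a : ι → ℝ) : sgnSum a (fun i => decide (a i < 0)) = ∑ i, |a i| := by
  unfold sgnSum
  exact Finset.sum_congr rfl fun i _ => ite_sgn_eq_abs a i

lemma negCount_eq_sum (ε : ι → Bool) : negCount ε = ∑ i, (if ε i then 1 else 0) := by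
  rw [negCount, Finset.card_filter]

lemma negCount_update_parity (ε : ι → Bool) (j : ι) :
    Even (negCount (Function.update ε j (!ε j))) ↔ ¬ Even (negCount ε) := by
  have h1 : negCount (Function.update ε j (!ε j)) =
      (if !ε j then 1 else 0) + ∑ i ∈ Finset.univ.erase j, (if ε i then 1 else 0) := by
    rw [negCount_eq_sum, ← Finset.add_sum_erase _ _ (Finset.mem_univ j)]
    congr 1
    · simp
    · exact Finset.sum_congr rfl fun i hi =>
        by rw [Function.update_of_ne (Finset.ne_of_mem_erase hi)]
  have h2 : negCount ε =
      (if ε j then 1 else 0) + ∑ i ∈ Finset.univ.erase j, (if ε i then 1 else 0) := by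
    rw [negCount_eq_sum, ← Finset.add_sum_erase _ _ (Finset.mem_univ j)]
  rw [h1, h2, Nat.even_iff, Nat.not_even_iff]
  cases hj : ε j <;> simp [hj] <;> omega

lemma sgnSum_update_canonical (a : ι → ℝ) (j : ι) :
    sgnSum a (Function.update (fun i => decide (a i < 0)) j (!decide (a j < 0)))
      = (∑ i, |a i|) - 2 * |a j| := by
  unfold sgnSum
  rw [← Finset.add_sum_erase _ _ (Finset.mem_univ j),
      ← Finset.add_sum_erase _ (fun i => |a i|) (Finset.mem_univ j)]
  have h1 : ∑ i ∈ Finset.univ.erase j,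
      (if (Function.update (fun i => decide (a i < 0)) j (!decide (a j < 0))) i then -(a i) else a i)
      = ∑ i ∈ Finset.univ.erase j, |a i| := by
    refine Finset.sum_congr rfl fun i hi => ?_
    rw [Function.update_of_ne (Finset.ne_of_mem_erase hi)]
    exact ite_sgn_eq_abs a i
  rw [h1, Function.update_self]
  have : (if (!decide (a j < 0)) = true then -(a j) else a j) = -|a j| := by
    by_cases h : a j < 0
    · simp [h, abs_of_neg h]
    · simp [h, abs_of_nonneg (le_of_not_gt h)]
  rw [this]; ring

lemma prod_eq_pow_mul (a : ι → ℝ) :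
    ∏ i, a i = (-1 : ℝ) ^ (negCount (fun i => decide (a i < 0))) * ∏ i, |a i| := by
  have key : ∀ i, a i = (if decide (a i < 0) = true then (-1:ℝ) else 1) * |a i| := fun i => by
    by_cases h : a i < 0
    · simp [h, abs_of_neg h]
    · simp [h, abs_of_nonneg (le_of_not_gt h)]
  rw [Finset.prod_congr rfl (fun i _ => key i), Finset.prod_mul_distrib]
  congr 1
  rw [negCount, ← Finset.prod_filter_mul_prod_filter_not Finset.univ
      (fun i => decide (a i < 0) = true)]
  have hl : ∀ x ∈ Finset.univ.filter (fun i => decide (a i < 0) = true),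
      (if decide (a x < 0) = true then (-1:ℝ) else 1) = -1 := fun x hx => by
    simp only [Finset.mem_filter] at hx; simp [hx.2]
  have hr : ∀ x ∈ Finset.univ.filter (fun i => ¬ decide (a i < 0) = true),
      (if decide (a x < 0) = true then (-1:ℝ) else 1) = 1 := fun x hx => by
    simp only [Finset.mem_filter] at hx; simp [hx.2]
  rw [Finset.prod_congr rfl hl, Finset.prod_congr rfl hr, Finset.prod_const,
      Finset.prod_const, one_pow, mul_one]

end Aux

lemma sgnSum_le_of_ne {ι : Type*} [Fintype ι] [DecidableEq ι] (a : ι → ℝ) (ε : ι → Bool)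
    (i : ι) (hi : ε i ≠ decide (a i < 0)) :
    sgnSum a ε ≤ (∑ k, |a k|) - 2 * |a i| := by
  unfold sgnSum
  rw [← Finset.add_sum_erase _ _ (Finset.mem_univ i),
      ← Finset.add_sum_erase _ (fun k => |a k|) (Finset.mem_univ i)]
  have hterm : (if ε i then -(a i) else a i) = -|a i| := by
    cases hεi : ε i
    · have hlt : a i < 0 := by
        by_contra h
        rw [hεi] at hi
        simp [h] at hi
      simp [abs_of_neg hlt]
    · have hge : ¬ a i < 0 := by
        intro h
        rw [hεi] at hi
        simp [h] at hi
      simp [abs_of_nonneg (le_of_not_gt hge)]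
  rw [hterm]
  have hsum : ∑ k ∈ Finset.univ.erase i, (if ε k then -(a k) else a k)
      ≤ ∑ k ∈ Finset.univ.erase i, |a k| :=
    Finset.sum_le_sum fun k _ => by split <;> [exact neg_le_abs _; exact le_abs_self _]
  linarith

theorem sEven_eq {ι : Type*} [Fintype ι] [DecidableEq ι] [Nonempty ι] (a : ι → ℝ) :
    ((∏ i, a i) < 0 →
      sEven a = ∑ i, |a i| - 2 * Finset.univ.inf' Finset.univ_nonempty (fun i => |a i|)) ∧
    (¬ ((∏ i, a i) < 0) → sEven a = ∑ i, |a i|) := by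
  set ε₀ : ι → Bool := fun i => decide (a i < 0) with hε₀
  have habs : (0:ℝ) ≤ ∏ i, |a i| := Finset.prod_nonneg fun i _ => abs_nonneg _
  constructor
  · intro hprod
    have hodd : ¬ Even (negCount ε₀) := by
      intro heven
      have hrw := prod_eq_pow_mul a
      rw [Even.neg_one_pow heven, one_mul] at hrw
      rw [hrw] at hprod
      linarith
    obtain ⟨j, -, hj⟩ := Finset.exists_mem_eq_inf' Finset.univ_nonempty (fun i => |a i|)
    apply le_antisymm
    · apply Finset.sup'_le
      intro ε hε
      rw [evenSigns, Finset.mem_filter] at hε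
      have hex : ∃ i, ε i ≠ ε₀ i := by
        by_contra h
        push_neg at h
        exact hodd (funext h ▸ hε.2)
      obtain ⟨i, hi⟩ := hex
      have h1 := sgnSum_le_of_ne a ε i hi
      have h2 : Finset.univ.inf' Finset.univ_nonempty (fun i => |a i|) ≤ |a i| :=
        Finset.inf'_le _ (Finset.mem_univ i)
      linarith
    · have hmem : Function.update ε₀ j (!ε₀ j) ∈ evenSigns ι := by
        rw [evenSigns, Finset.mem_filter]
        exact ⟨Finset.mem_univ _, (negCount_update_parity ε₀ j).2 hodd⟩
      have := Finset.le_sup' (sgnSum a) hmem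
      rw [sgnSum_update_canonical a j, ← hj] at this
      exact this
  · intro hprod
    apply le_antisymm
    · exact Finset.sup'_le _ _ fun ε _ => sgnSum_le_sum_abs a ε
    · by_cases hz : ∃ i, a i = 0
      · obtain ⟨j, hja⟩ := hz
        by_cases he : Even (negCount ε₀)
        · have hmem : ε₀ ∈ evenSigns ι := by
            rw [evenSigns, Finset.mem_filter]; exact ⟨Finset.mem_univ _, he⟩
          have := Finset.le_sup' (sgnSum a) hmem
          rwa [sgnSum_canonical a] at this
        · have hmem : Function.update ε₀ j (!ε₀ j) ∈ evenSigns ι := by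
            rw [evenSigns, Finset.mem_filter]
            exact ⟨Finset.mem_univ _, (negCount_update_parity ε₀ j).2 he⟩
          have := Finset.le_sup' (sgnSum a) hmem
          rw [sgnSum_update_canonical a j, hja, abs_zero, mul_zero, sub_zero] at this
          exact this
      · push_neg at hz
        have hne : (∏ i, a i) ≠ 0 := Finset.prod_ne_zero_iff.2 fun i _ => hz i
        have hpos : 0 < ∏ i, a i := lt_of_le_of_ne (le_of_not_gt hprod) (Ne.symm hne)
        have he : Even (negCount ε₀) := by
          by_contra ho
          have hrw := prod_eq_pow_mul a
          rw [Odd.neg_one_pow (Nat.not_even_iff_odd.1 ho), neg_one_mul] at hrw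
          rw [hrw] at hpos
          linarith
        have hmem : ε₀ ∈ evenSigns ι := by
          rw [evenSigns, Finset.mem_filter]; exact ⟨Finset.mem_univ _, he⟩
        have := Finset.le_sup' (sgnSum a) hmem
        rwa [sgnSum_canonical a] at this
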